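/- Suppose ϑ = ν ⊗ λ is the product of a Borel probability measure ν on [0,∞) with ν({0}) = 0 and ∫ x dν(x) = 1/α, and a Borel probability measure λ on ℝ. For z > 0, let ν̄_e^z be the Borel measure on ℝ with Lebesgue density u ↦ α ν((−u z⁻¹, ∞)) for u ≤ 0 and density 0 for u > 0. Then the pushforward of ϑ_e^z under the second-coordinate projection π(x,y) = y equals the convolution λ ⋆ ν̄_e^z. -/

import Mathlib

open MeasureTheory Set Filter Topology

noncomputable section

/-- The right half-plane `ℍ₊ = [0,⊤) × ℝ`, as a subset of `ℝ × ℝ`. -/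
def Hplus : Set (ℝ × ℝ) := {p | 0 ≤ p.1}

/-- Translation of a set: `B + w = {b + w : b ∈ B}`. -/
def shiftSet (B : Set (ℝ × ℝ)) (w : ℝ × ℝ) : Set (ℝ × ℝ) := (fun b => b + w) '' B

/-- The measure `ν̄_e^z` on `ℝ`, with Lebesgue density `u ↦ α ν((−u z⁻¹, ⊤))` for `u ≤ 0`
and density `0` for `u > 0`. -/
def nuBarE (α : ℝ) (ν : Measure ℝ) (z : ℝ) : Measure ℝ :=
  volume.withDensity fun u => if u ≤ 0 then ENNReal.ofReal α * ν (Ioi (-u / z)) else 0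

/-- if `ϑ = ν ⊗ λ` is a product, the second-coordinate marginal of `ϑ_e^z`
is the convolution `λ ⋆ ν̄_e^z`. -/
theorem stmt_9 (α : ℝ) (hα : 0 < α)
    (ν : Measure ℝ) [IsProbabilityMeasure ν]
    (hνsupp : ν {x : ℝ | x < 0} = 0) (hνatom : ν ({0} : Set ℝ) = 0)
    (hνmean : ∫⁻ x, ENNReal.ofReal x ∂ν = ENNReal.ofReal α⁻¹)
    (lam : Measure ℝ) [IsProbabilityMeasure lam]
    (ϑ : Measure (ℝ × ℝ)) (hϑprod : ϑ = ν.prod lam)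
    (z : ℝ) (hz : 0 < z) (τ : Measure (ℝ × ℝ)) [IsFiniteMeasure τ]
    (hτsupp : τ {p : ℝ × ℝ | p.1 < 0} = 0)
    (hτ : ∀ B : Set (ℝ × ℝ), MeasurableSet B → B ⊆ Hplus →
      τ B = ENNReal.ofReal α * ∫⁻ u in Ioi (0 : ℝ), ϑ (shiftSet B (u / z, u))) :
    τ.map Prod.snd = ((lam.prod (nuBarE α ν z)).map fun p : ℝ × ℝ => p.1 + p.2) := by
  subst hϑprod
  ext A hA
  rw [Measure.map_apply measurable_snd hA,
      Measure.map_apply (f := fun p : ℝ × ℝ => p.1 + p.2) (measurable_fst.add measurable_snd) hA]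
  set c : ENNReal := ENNReal.ofReal α with hc
  have hcne : c ≠ ⊤ := ENNReal.ofReal_ne_top
  -- the function `g u = lam {y | y - u ∈ A}`
  set g : ℝ → ENNReal := fun u => lam ((fun y => y - u) ⁻¹' A) with hg
  -- LHS computation
  have hHmeas : MeasurableSet Hplus := measurableSet_le measurable_const measurable_fst
  set B : Set (ℝ × ℝ) := Prod.snd ⁻¹' A ∩ Hplus with hBdef
  have hBmeas : MeasurableSet B := (measurable_snd hA).inter hHmeas
  have hτA : τ (Prod.snd ⁻¹' A) = τ B := by
    have h1 : τ (Prod.snd ⁻¹' A \ Hplus) = 0 := by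
      refine measure_mono_null (fun p hp => ?_) hτsupp
      have := hp.2
      simpa [Hplus, not_le] using this
    conv_lhs => rw [← measure_inter_add_diff (Prod.snd ⁻¹' A) hHmeas]
    rw [h1, add_zero]
  rw [hτA, hτ B hBmeas inter_subset_right]
  -- shifted set computation
  have hshift : ∀ u : ℝ,
      shiftSet B (u / z, u) = (Ici (u / z)) ×ˢ ((fun y => y - u) ⁻¹' A) := by
    intro u
    ext p
    constructor
    · rintro ⟨b, ⟨hbA, hb1⟩, rfl⟩
      refine ⟨?_, ?_⟩
      · simpa [Prod.fst_add] using add_le_add_right (hb1 : (0:ℝ) ≤ b.1) (u / z)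
      · simpa [Prod.snd_add] using hbA
    · rintro ⟨h1, h2⟩
      refine ⟨(p.1 - u / z, p.2 - u), ⟨?_, ?_⟩, ?_⟩
      · simpa using h2
      · simpa [Hplus] using (sub_nonneg.mpr (mem_Ici.mp h1 : u / z ≤ p.1))
      · ext <;> simp
  have hϑs : ∀ u : ℝ, (ν.prod lam) (shiftSet B (u / z, u)) = ν (Ici (u / z)) * g u := by
    intro u; rw [hshift u, Measure.prod_prod]
  rw [lintegral_congr hϑs]
  rw [← lintegral_const_mul' c _ hcne, ← lintegral_indicator measurableSet_Ioi]
  -- RHS computation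
  set f : ℝ → ENNReal := fun u => if u ≤ 0 then c * ν (Ioi (-u / z)) else 0 with hf
  have hνmono : Antitone fun t : ℝ => ν (Ioi t) :=
    fun a b hab => measure_mono (Ioi_subset_Ioi hab)
  have hfmeas : Measurable f := by
    refine Measurable.ite measurableSet_Iic (measurable_const.mul ?_) measurable_const
    exact hνmono.measurable.comp (measurable_neg.div_const z)
  have hflt : ∀ᵐ u ∂(volume : Measure ℝ), f u < ⊤ := by
    refine ae_of_all _ fun u => ?_
    simp only [hf]
    split
    · exact ENNReal.mul_lt_top ENNReal.ofReal_lt_top (measure_lt_top ν _)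
    · simp
  have hS : MeasurableSet ((fun p : ℝ × ℝ => p.1 + p.2) ⁻¹' A) :=
    (measurable_fst.add measurable_snd) hA
  haveI : SFinite (nuBarE α ν z) := by rw [nuBarE]; infer_instance
  rw [Measure.prod_apply_symm hS]
  set G : ℝ → ENNReal :=
    fun v => lam ((fun x => (x, v)) ⁻¹' ((fun p : ℝ × ℝ => p.1 + p.2) ⁻¹' A)) with hG
  have hGmeas : Measurable G := measurable_measure_prodMk_right hS
  show (∫⁻ u, (Ioi (0:ℝ)).indicator (fun u => c * (ν (Ici (u / z)) * g u)) u)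
      = ∫⁻ v, G v ∂(nuBarE α ν z)
  have hmul : (∫⁻ v, G v ∂(nuBarE α ν z)) = ∫⁻ v, f v * G v := by
    rw [nuBarE]
    exact (lintegral_withDensity_eq_lintegral_mul_non_measurable volume hfmeas hflt G).trans
      (lintegral_congr fun v => rfl)
  rw [hmul]
  have hneg : (∫⁻ v, f v * G v) = ∫⁻ u, f (-u) * G (-u) := by
    have hm : Measurable fun v => f v * G v := hfmeas.mul hGmeas
    conv_lhs => rw [← Measure.map_neg_eq_self (volume : Measure ℝ)]
    rw [lintegral_map hm measurable_neg]
  rw [hneg]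
  -- a.e. equality of atoms
  have hcount : ({t : ℝ | 0 < ν {t}}).Countable := by
    simpa [Set.setOf_eq_eq_singleton] using
      Measure.countable_meas_level_set_pos (μ := ν) (measurable_id (α := ℝ))
  have hatoms : ∀ᵐ u : ℝ, ν (Ici (u / z)) = ν (Ioi (u / z)) := by
    have hN : (volume : Measure ℝ) ((fun t : ℝ => t * z) '' {t : ℝ | 0 < ν {t}}) = 0 :=
      (hcount.image _).measure_zero _
    filter_upwards [compl_mem_ae_iff.mpr hN] with u hu
    have hsing : ν {u / z} = 0 := by
      by_contra h
      exact hu ⟨u / z, pos_iff_ne_zero.mpr h, div_mul_cancel₀ u hz.ne'⟩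
    have h1 : ν (Ici (u / z)) ≤ ν (Ioi (u / z)) := by
      calc ν (Ici (u / z)) = ν (Ioi (u / z) ∪ {u / z}) := by rw [Ioi_union_left]
        _ ≤ ν (Ioi (u / z)) + ν {u / z} := measure_union_le _ _
        _ = ν (Ioi (u / z)) := by rw [hsing, add_zero]
    exact le_antisymm h1 (measure_mono Ioi_subset_Ici_self)
  have h0 : ∀ᵐ u : ℝ ∂(volume : Measure ℝ), u ≠ 0 := by
    have hvol : (volume : Measure ℝ) {(0:ℝ)} = 0 := Real.volume_singleton
    rw [ae_iff]
    convert hvol using 2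
    ext x
    simp
  have hGg : ∀ u : ℝ, G (-u) = g u := by
    intro u
    simp only [hG, hg]
    congr 1
  refine lintegral_congr_ae ?_
  filter_upwards [hatoms, h0] with u hIci hu0
  by_cases hupos : 0 < u
  · rw [Set.indicator_of_mem (mem_Ioi.mpr hupos)]
    have hfval : f (-u) = c * ν (Ioi (u / z)) := by
      simp only [hf]
      rw [if_pos (by linarith : -u ≤ (0:ℝ)), neg_neg]
    rw [hfval, hGg u, hIci, mul_assoc]
  · have hult : u < 0 := lt_of_le_of_ne (not_lt.mp hupos) hu0
    rw [Set.indicator_of_notMem (fun h => hupos (mem_Ioi.mp h))]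
    have hfval : f (-u) = 0 := by
      simp only [hf]
      rw [if_neg (not_le.mpr (by linarith : (0:ℝ) < -u))]
    rw [hfval, zero_mul]
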